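/- For σ ≥ 1, the function g(t) = (σ/(σt+1−t))·log(σt/(σt+1−t)) − (log t)/σ on (0,1) is nondecreasing, and hence g(t) ≤ 0 for all t ∈ (0,1). -/

import Mathlib

open Real Set

theorem stmt2 (σ : ℝ) (hσ : 1 ≤ σ) :
    MonotoneOn
      (fun t : ℝ => σ / (σ * t + 1 - t) * Real.log (σ * t / (σ * t + 1 - t))
        - Real.log t / σ) (Set.Ioo 0 1) ∧
    ∀ t ∈ Set.Ioo (0:ℝ) 1,
      σ / (σ * t + 1 - t) * Real.log (σ * t / (σ * t + 1 - t)) - Real.log t / σ ≤ 0 := by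
  have hσ0 : (0:ℝ) < σ := lt_of_lt_of_le one_pos hσ
  set g : ℝ → ℝ := fun t => σ / (σ * t + 1 - t) * Real.log (σ * t / (σ * t + 1 - t))
        - Real.log t / σ with hg
  have hD : ∀ t : ℝ, 0 < t → 0 < σ * t + 1 - t := fun t ht => by nlinarith
  -- the derivative expression
  set φ : ℝ → ℝ := fun x => (σ * (-(σ-1) / (σ*x+1-x)^2)) * (Real.log (σ*x) - Real.log (σ*x+1-x))
      + σ/(σ*x+1-x) * (σ/(σ*x) - (σ-1)/(σ*x+1-x)) - (1/x)/σ with hφ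
  have hderiv : ∀ x ∈ Set.Ioo (0:ℝ) 1, HasDerivAt g (φ x) x := by
    intro x hx
    have hx0 : (0:ℝ) < x := hx.1
    have hDx : 0 < σ * x + 1 - x := hD x hx0
    have hσx : 0 < σ * x := by positivity
    have hDd : HasDerivAt (fun t : ℝ => σ * t + 1 - t) (σ - 1) x := by
      simpa [Pi.sub_def] using (((hasDerivAt_id x).const_mul σ).add_const 1).sub (hasDerivAt_id x)
    have h1 : HasDerivAt (fun t : ℝ => σ / (σ * t + 1 - t))
        (σ * (-(σ-1) / (σ*x+1-x)^2)) x := by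
      have := (hDd.inv hDx.ne').const_mul σ
      simpa [div_eq_mul_inv, neg_div] using this
    have h2 : HasDerivAt (fun t : ℝ => Real.log (σ * t) - Real.log (σ * t + 1 - t))
        (σ/(σ*x) - (σ-1)/(σ*x+1-x)) x := by
      simpa [Pi.sub_def] using (((hasDerivAt_id x).const_mul σ).log hσx.ne').sub (hDd.log hDx.ne')
    have h3 : HasDerivAt (fun t : ℝ => Real.log t / σ) ((1/x)/σ) x := by
      simpa using (Real.hasDerivAt_log hx0.ne').div_const σ
    have h : HasDerivAt (fun t : ℝ => σ / (σ * t + 1 - t) *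
        (Real.log (σ * t) - Real.log (σ * t + 1 - t)) - Real.log t / σ) (φ x) x := by
      simpa [hφ, Pi.sub_def, Pi.mul_def] using (h1.mul h2).sub h3
    apply h.congr_of_eventuallyEq
    filter_upwards [isOpen_Ioo.mem_nhds hx] with y hy
    have hy0 : (0:ℝ) < y := hy.1
    have hDy : 0 < σ * y + 1 - y := hD y hy0
    rw [hg]
    simp only
    rw [Real.log_div (by positivity) hDy.ne']
  have hφ0 : ∀ x ∈ Set.Ioo (0:ℝ) 1, 0 ≤ φ x := by
    intro x hx
    have hx0 : (0:ℝ) < x := hx.1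
    have hx1 : x < 1 := hx.2
    have hDx : 0 < σ * x + 1 - x := hD x hx0
    have hDle : σ * x + 1 - x ≤ σ := by nlinarith
    have hlog : Real.log (σ*x) ≤ Real.log (σ*x+1-x) :=
      Real.log_le_log (by positivity) (by nlinarith)
    have hA : 0 ≤ σ*(σ-1)/(σ*x+1-x)^2 * (Real.log (σ*x+1-x) - Real.log (σ*x)) := by
      apply mul_nonneg
      · apply div_nonneg (by nlinarith) (by positivity)
      · linarith
    have hB : 0 ≤ σ/(x*(σ*x+1-x)^2) - 1/(σ*x) := by
      have hsq : (σ*x+1-x)^2 ≤ σ^2 := by nlinarith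
      rw [sub_nonneg, div_le_div_iff₀ (by positivity) (by positivity)]
      nlinarith
    have heq : φ x = σ*(σ-1)/(σ*x+1-x)^2 * (Real.log (σ*x+1-x) - Real.log (σ*x))
        + (σ/(x*(σ*x+1-x)^2) - 1/(σ*x)) := by
      rw [hφ]; field_simp; ring
    rw [heq]; linarith
  have key : MonotoneOn g (Set.Ioc 0 1) := by
    apply monotoneOn_of_hasDerivWithinAt_nonneg (convex_Ioc 0 1) (f' := φ)
    · -- continuity on Ioc
      have hc : ∀ t ∈ Set.Ioc (0:ℝ) 1, 0 < σ * t + 1 - t := fun t ht => hD t ht.1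
      apply ContinuousOn.sub
      · apply ContinuousOn.mul
        · exact continuousOn_const.div (by fun_prop) (fun t ht => (hc t ht).ne')
        · apply ContinuousOn.log
          · exact (by fun_prop : ContinuousOn (fun t:ℝ => σ*t) _).div (by fun_prop)
              (fun t ht => (hc t ht).ne')
          · intro t ht
            exact ne_of_gt (div_pos (mul_pos hσ0 ht.1) (hc t ht))
      · exact (Real.continuousOn_log.comp (by fun_prop)
          (fun t ht => by simpa using ht.1.ne')).div_const σ
    · intro x hx
      rw [interior_Ioc] at hx
      exact ((hderiv x hx).hasDerivWithinAt).mono interior_subset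
    · intro x hx
      rw [interior_Ioc] at hx
      exact hφ0 x hx
  constructor
  · exact key.mono Set.Ioo_subset_Ioc_self
  · intro t ht
    have h1 : g 1 = 0 := by
      rw [hg]; norm_num [div_self hσ0.ne']
    have := key ⟨ht.1, ht.2.le⟩ (Set.mem_Ioc.2 ⟨one_pos, le_refl 1⟩) ht.2.le
    rw [h1] at this
    exact this
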